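/- Let g : [0,1] → ℝ≥0 be non-increasing and integrable, let A > 0 and α := 2e/(e-1). If g(θ) < A / ((α + 2θ - 2)) for all θ ∈ [0,1], then ∫₀¹ g(θ) dθ < A/2. Consequently, if ∫₀¹ g(θ) dθ ≥ A/2, then there exists θ ∈ [0,1] with g(θ) ≥ A / (α + 2θ - 2). -/

import Mathlib

open Real Set

theorem stmt_3 (g : ℝ → ℝ) (hg : AntitoneOn g (Icc 0 1))
    (hint : IntervalIntegrable g MeasureTheory.volume 0 1)
    (hg0 : ∀ θ ∈ Icc (0:ℝ) 1, 0 ≤ g θ)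
    (A : ℝ) (hA : 0 < A) (α : ℝ) (hα : α = 2 * Real.exp 1 / (Real.exp 1 - 1)) :
    ((∀ θ ∈ Icc (0:ℝ) 1, g θ < A / (α + 2 * θ - 2)) →
      (∫ θ in (0:ℝ)..1, g θ) < A / 2) ∧
    (A / 2 ≤ (∫ θ in (0:ℝ)..1, g θ) →
      ∃ θ ∈ Icc (0:ℝ) 1, A / (α + 2 * θ - 2) ≤ g θ) := by
  have he : (1:ℝ) < Real.exp 1 := by
    have := Real.exp_one_gt_d9; linarith
  have hα2 : 2 < α := by
    rw [hα, lt_div_iff₀ (by linarith)]; linarith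
  set h : ℝ → ℝ := fun θ => A / (α + 2 * θ - 2) with hh
  have hden : ∀ θ ∈ Icc (0:ℝ) 1, 0 < α + 2 * θ - 2 := by
    intro θ hθ; have := hθ.1; linarith
  have hcont : ContinuousOn h (Icc 0 1) := by
    apply ContinuousOn.div continuousOn_const ((by continuity : Continuous fun θ : ℝ => α + 2 * θ - 2).continuousOn)
    intro θ hθ; exact (hden θ hθ).ne'
  have hhint : IntervalIntegrable h MeasureTheory.volume 0 1 := by
    apply ContinuousOn.intervalIntegrable
    rwa [uIcc_of_le zero_le_one]
  have hinth : (∫ θ in (0:ℝ)..1, h θ) = A / 2 := by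
    have hderiv : ∀ θ ∈ uIcc (0:ℝ) 1,
        HasDerivAt (fun x => A / 2 * Real.log (α + 2 * x - 2)) (h θ) θ := by
      intro θ hθ
      rw [uIcc_of_le zero_le_one] at hθ
      have hd : HasDerivAt (fun x : ℝ => α + 2 * x - 2) 2 θ := by
        simpa using (((hasDerivAt_id θ).const_mul 2).const_add α).sub_const 2
      have hne : α + 2 * θ - 2 ≠ 0 := (hden θ hθ).ne'
      have := (hd.log hne).const_mul (A / 2)
      refine this.congr_deriv ?_
      simp only [hh]
      field_simp
    have := intervalIntegral.integral_eq_sub_of_hasDerivAt hderiv hhint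
    rw [this]
    have h1 : α + 2 * 1 - 2 = α := by ring
    have h2 : α + 2 * 0 - 2 = α - 2 := by ring
    rw [h1, h2]
    have hαpos : (0:ℝ) < α := by linarith
    have hα2pos : (0:ℝ) < α - 2 := by linarith
    have hq : α / (α - 2) = Real.exp 1 := by
      rw [hα]
      have : Real.exp 1 - 1 ≠ 0 := by linarith
      field_simp
      ring
    have : Real.log α - Real.log (α - 2) = 1 := by
      rw [← Real.log_div hαpos.ne' hα2pos.ne', hq, Real.log_exp]
    rw [mul_comm (A/2), mul_comm (A/2), ← sub_mul, this, one_mul]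
  have key : (∀ θ ∈ Icc (0:ℝ) 1, g θ < A / (α + 2 * θ - 2)) →
      (∫ θ in (0:ℝ)..1, g θ) < A / 2 := by
    intro hlt
    have hpos : 0 < ∫ θ in (0:ℝ)..1, (h θ - g θ) := by
      apply intervalIntegral.intervalIntegral_pos_of_pos_on (hhint.sub hint)
      · intro x hx
        have : g x < h x := hlt x ⟨hx.1.le, hx.2.le⟩
        linarith
      · norm_num
    rw [intervalIntegral.integral_sub hhint hint, hinth] at hpos
    linarith
  refine ⟨key, ?_⟩
  intro hge
  by_contra hno
  push_neg at hno
  linarith [key hno]
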